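/- arXiv:1102.2212 — 8 statements merged into one kernel-verified Lean document; each statement's English description precedes it below -/
import Mathlib

section
/- Let M be a symmetric negative definite real n×n matrix all of whose off-diagonal entries are non-negative. Then every entry of the inverse matrix M⁻¹ is non-positive. -/
open Matrix

/-- Lemma 3.2 of the paper: a symmetric negative definite real `n × n` matrix all of whose
off-diagonal entries are non-negative has an inverse all of whose entries are non-positive. -/
theorem inv_entries_nonpos (n : ℕ) (M : Matrix (Fin n) (Fin n) ℝ)
    (hsymm : M.IsSymm)
    (hneg : ∀ x : Fin n → ℝ, x ≠ 0 → x ⬝ᵥ M.mulVec x < 0)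
    (hoff : ∀ i j, i ≠ j → 0 ≤ M i j) :
    ∀ i j, M⁻¹ i j ≤ 0 := by
  have hdet : IsUnit M.det := by
    rw [isUnit_iff_ne_zero]
    intro h
    obtain ⟨x, hx0, hxne⟩ := (Matrix.exists_mulVec_eq_zero_iff).2 h
    have h2 := hneg x hx0
    rw [hxne] at h2
    simp at h2
  intro i j
  set x : Fin n → ℝ := fun i => M⁻¹ i j with hxdef
  have hMx : M.mulVec x = fun i => if i = j then (1:ℝ) else 0 := by
    funext k
    have h1 : (M * M⁻¹) k j = (1 : Matrix (Fin n) (Fin n) ℝ) k j := by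
      rw [Matrix.mul_nonsing_inv M hdet]
    simpa [Matrix.mul_apply, Matrix.mulVec, dotProduct, Matrix.one_apply, hxdef] using h1
  set u : Fin n → ℝ := fun i => max (x i) 0 with hudef
  set v : Fin n → ℝ := fun i => max (-x i) 0 with hvdef
  have hu0 : ∀ i, 0 ≤ u i := fun i => le_max_right _ _
  have hv0 : ∀ i, 0 ≤ v i := fun i => le_max_right _ _
  have huv : (u : Fin n → ℝ) = x + v := by
    funext i
    simp only [hudef, hvdef, Pi.add_apply, max_def]
    split_ifs <;> simp <;> linarith
  have huvz : ∀ i, u i * v i = 0 := by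
    intro i
    simp only [hudef, hvdef, max_def]
    split_ifs with h1 h2 h2 <;> simp_all <;> nlinarith
  have hux : u ⬝ᵥ M.mulVec x = u j := by
    rw [hMx]
    simp [dotProduct]
  have huMv : 0 ≤ u ⬝ᵥ M.mulVec v := by
    simp only [dotProduct, Matrix.mulVec, Finset.mul_sum]
    apply Finset.sum_nonneg
    intro k _
    apply Finset.sum_nonneg
    intro l _
    rcases eq_or_ne k l with rfl | hkl
    · have h0 : u k * (M k k * v k) = M k k * (u k * v k) := by ring
      rw [h0, huvz k, mul_zero]
    · exact mul_nonneg (hu0 k) (mul_nonneg (hoff k l hkl) (hv0 l))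
  have hquu : 0 ≤ u ⬝ᵥ M.mulVec u := by
    rw [huv, Matrix.mulVec_add, dotProduct_add, ← huv]
    have : 0 ≤ u j := hu0 j
    linarith [hux, huMv]
  have hu : (u : Fin n → ℝ) = 0 := by
    by_contra h
    exact absurd hquu (not_le.2 (hneg u h))
  have hxle : x i ≤ 0 := by
    have : u i = 0 := congrFun hu i
    simp only [hudef] at this
    by_contra h
    push_neg at h
    rw [max_eq_left h.le] at this
    linarith
  exact hxle
end

section
/- Let M be a symmetric negative definite integer n×n matrix with non-negative off-diagonal entries, and suppose a ∈ ℤⁿ with a_i ≥ 0 for all i satisfies Ma = (-1 + b_0, b_1, ..., b_{n-1})ᵀ where all b_i ≥ 0 and b_j > 0 for some j ≠ 0. Then b_0 = 0. -/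
open Matrix

/-- Part of Corollary 3.3: if `M` is a symmetric negative definite integer matrix with
non-negative off-diagonal entries and `M a = (-1 + b 0, b 1, ..., b (n-1))` with `a, b`
entrywise non-negative and `b j > 0` for some `j ≠ 0`, then `b 0 = 0`. -/
theorem b_zero_eq_zero (n : ℕ) (hn : 0 < n) (M : Matrix (Fin n) (Fin n) ℤ)
    (hsymm : M.IsSymm)
    (hneg : ∀ x : Fin n → ℤ, x ≠ 0 → x ⬝ᵥ M.mulVec x < 0)
    (hoff : ∀ i j, i ≠ j → 0 ≤ M i j)
    (a b : Fin n → ℤ) (ha : ∀ i, 0 ≤ a i) (hb : ∀ i, 0 ≤ b i)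
    (j : Fin n) (hj : j ≠ ⟨0, hn⟩) (hbj : 0 < b j)
    (hMa : M.mulVec a = fun i => if i = ⟨0, hn⟩ then -1 + b i else b i) :
    b ⟨0, hn⟩ = 0 := by
  by_contra h
  have hb0 : 1 ≤ b ⟨0, hn⟩ := lt_of_le_of_ne (hb _) (Ne.symm h)
  have hcnn : ∀ i, 0 ≤ M.mulVec a i := by
    intro i
    rw [hMa]
    by_cases hi : i = ⟨0, hn⟩
    · simp only [hi, if_pos rfl]; omega
    · simp only [if_neg hi]; exact hb i
  have hane : a ≠ 0 := by
    intro h0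
    have : M.mulVec a j = 0 := by simp [h0]
    rw [hMa] at this
    simp [hj] at this
    omega
  have hlt := hneg a hane
  have hge : 0 ≤ a ⬝ᵥ M.mulVec a :=
    Finset.sum_nonneg fun i _ => mul_nonneg (ha i) (hcnn i)
  omega
end

section
/- Let M be a symmetric negative definite integer n×n matrix with non-negative off-diagonal entries, and suppose a ∈ ℤⁿ with a_i ≥ 0 satisfies (Ma)_0 = -1 and (Ma)_i ≥ 0 for all i ≥ 1. Then a_0 > 0. -/
open Matrix

/-- Corollary 3.3: if `M` is a symmetric negative definite integer matrix with non-negative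
off-diagonal entries, `a` is entrywise non-negative, `(M a)_0 = -1` and `(M a)_i ≥ 0` for
`i ≥ 1`, then `a_0 > 0`. -/
theorem a_zero_pos (n : ℕ) (hn : 0 < n) (M : Matrix (Fin n) (Fin n) ℤ)
    (hsymm : M.IsSymm)
    (hneg : ∀ x : Fin n → ℤ, x ≠ 0 → x ⬝ᵥ M.mulVec x < 0)
    (hoff : ∀ i j, i ≠ j → 0 ≤ M i j)
    (a : Fin n → ℤ) (ha : ∀ i, 0 ≤ a i)
    (hMa0 : M.mulVec a ⟨0, hn⟩ = -1)
    (hMai : ∀ i, i ≠ ⟨0, hn⟩ → 0 ≤ M.mulVec a i) :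
    0 < a ⟨0, hn⟩ := by
  rcases lt_or_eq_of_le (ha ⟨0, hn⟩) with h | h
  · exact h
  · exfalso
    -- a ≠ 0 since (M a)₀ = -1 ≠ 0
    have hane : a ≠ 0 := by
      intro h0
      rw [h0, Matrix.mulVec_zero] at hMa0
      exact absurd hMa0 (by norm_num)
    have hlt := hneg a hane
    have hge : 0 ≤ a ⬝ᵥ M.mulVec a := by
      apply Finset.sum_nonneg
      intro i _
      rcases eq_or_ne i ⟨0, hn⟩ with rfl | hi
      · rw [← h]
        simp
      · exact mul_nonneg (ha i) (hMai i hi)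
    exact absurd hlt (not_lt.mpr hge)
end

section
/- Let v_1, ..., v_n be a basis of ℝⁿ (with the standard inner product) such that ⟨v_i, v_j⟩ ≤ 0 for all i ≠ j. Let w_1, ..., w_n be the dual basis, i.e. ⟨v_i, w_j⟩ = δ_{ij}. Then ⟨w_i, w_j⟩ ≥ 0 for all i, j. -/
open scoped RealInnerProductSpace

/-- Geometric core of Lemma 3.2: if `v` is a basis of Euclidean space all of whose pairwise
inner products are non-positive, then the dual basis `w` (with `⟪v i, w j⟫ = δ_{ij}`) has all
pairwise inner products non-negative. -/
theorem dual_basis_inner_nonneg (n : ℕ) (v w : Fin n → EuclideanSpace ℝ (Fin n))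
    (hindep : LinearIndependent ℝ v)
    (hspan : Submodule.span ℝ (Set.range v) = ⊤)
    (hangle : ∀ i j, i ≠ j → ⟪v i, v j⟫ ≤ 0)
    (hdual : ∀ i j, ⟪v i, w j⟫ = if i = j then (1 : ℝ) else 0) :
    ∀ i j, 0 ≤ ⟪w i, w j⟫ := by
  classical
  intro i j
  have hsp : ⊤ ≤ Submodule.span ℝ (Set.range v) := hspan.ge
  set B : Module.Basis (Fin n) ℝ (EuclideanSpace ℝ (Fin n)) := Module.Basis.mk hindep hsp with hBdef
  have hB : ∀ k, B k = v k := fun k => Module.Basis.mk_apply hindep hsp k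
  set c : Fin n → ℝ := fun k => B.repr (w i) k with hc
  have hrepr : ∑ k, c k • v k = w i := by
    have h := B.sum_repr (w i)
    calc ∑ k, c k • v k = ∑ k, B.repr (w i) k • B k := by
          refine Finset.sum_congr rfl fun k _ => ?_
          rw [hB]
      _ = w i := h
  -- all coefficients are nonnegative
  have hck : ∀ k, 0 ≤ c k := by
    by_contra h
    push_neg at h
    obtain ⟨k₀, hk₀⟩ := h
    set d : Fin n → ℝ := fun k => max (-(c k)) 0 with hd
    set e : Fin n → ℝ := fun k => max (c k) 0 with he
    have hde : ∀ k, c k = e k - d k := by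
      intro k
      rcases le_total (c k) 0 with hk | hk
      · have h1 : e k = 0 := max_eq_right hk
        have h2 : d k = -(c k) := max_eq_left (by linarith)
        rw [h1, h2]; ring
      · have h1 : e k = c k := max_eq_left hk
        have h2 : d k = 0 := max_eq_right (by linarith)
        rw [h1, h2]; ring
    have hde0 : ∀ k, d k * e k = 0 := by
      intro k
      rcases le_total (c k) 0 with hk | hk
      · have h1 : e k = 0 := max_eq_right hk
        rw [h1, mul_zero]
      · have h2 : d k = 0 := max_eq_right (by linarith)
        rw [h2, zero_mul]
    have hdnn : ∀ k, 0 ≤ d k := fun k => le_max_right _ _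
    have henn : ∀ k, 0 ≤ e k := fun k => le_max_right _ _
    set q : EuclideanSpace ℝ (Fin n) := ∑ k, d k • v k with hq
    set p : EuclideanSpace ℝ (Fin n) := ∑ k, e k • v k with hp
    have hx : w i = p - q := by
      rw [← hrepr, hp, hq, ← Finset.sum_sub_distrib]
      refine Finset.sum_congr rfl fun k _ => ?_
      rw [hde k, sub_smul]
    have hqp : ⟪q, p⟫ ≤ 0 := by
      rw [hq, hp, sum_inner]
      refine Finset.sum_nonpos fun k _ => ?_
      rw [real_inner_smul_left, inner_sum, Finset.mul_sum]
      refine Finset.sum_nonpos fun l _ => ?_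
      rw [real_inner_smul_right]
      rcases eq_or_ne k l with rfl | hkl
      · calc d k * (e k * ⟪v k, v k⟫) = (d k * e k) * ⟪v k, v k⟫ := by ring
          _ = 0 := by rw [hde0 k, zero_mul]
          _ ≤ 0 := le_refl 0
      · have h1 := hangle k l hkl
        have h2 := hdnn k
        have h3 := henn l
        exact mul_nonpos_of_nonneg_of_nonpos h2 (mul_nonpos_of_nonneg_of_nonpos h3 h1)
    have hqx : 0 ≤ ⟪q, w i⟫ := by
      rw [hq, sum_inner]
      refine Finset.sum_nonneg fun k _ => ?_
      rw [real_inner_smul_left, hdual]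
      split_ifs with hki
      · simpa using hdnn k
      · simp
    have hqq : ⟪q, q⟫ ≤ 0 := by
      have h4 : ⟪q, q⟫ = ⟪q, p⟫ - ⟪q, w i⟫ := by
        rw [hx, inner_sub_right]; ring
      linarith
    have hq0 : q = 0 := real_inner_self_nonpos.mp hqq
    have hlin := Fintype.linearIndependent_iff.mp hindep d (by rw [← hq]; exact hq0)
    have hdk₀ : d k₀ = 0 := hlin k₀
    have h5 : d k₀ = -(c k₀) := max_eq_left (by linarith)
    linarith
  -- now compute ⟪w i, w j⟫ = c j
  have hwij : ⟪w i, w j⟫ = c j := by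
    rw [← hrepr, sum_inner]
    have h6 : ∀ k ∈ Finset.univ, ⟪c k • v k, w j⟫ = if k = j then c k else 0 := by
      intro k _
      rw [real_inner_smul_left, hdual]
      split_ifs <;> ring
    rw [Finset.sum_congr rfl h6, Finset.sum_ite_eq' Finset.univ j]
    simp
  rw [hwij]
  exact hck j
end

section
/- Let M be a symmetric positive definite real n×n matrix with non-positive off-diagonal entries, and let b ∈ ℝⁿ have all entries non-negative. Then the unique solution a of Ma = b has all entries non-negative. -/
open Matrix

/-- For a symmetric positive definite matrix `M` with non-positive off-diagonal entries and an
entrywise non-negative vector `b`, the solution `a` of `M a = b` is entrywise non-negative. -/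
theorem solution_nonneg (n : ℕ) (M : Matrix (Fin n) (Fin n) ℝ)
    (hsymm : M.IsSymm) (hpos : M.PosDef)
    (hoff : ∀ i j, i ≠ j → M i j ≤ 0)
    (a b : Fin n → ℝ) (hb : ∀ i, 0 ≤ b i)
    (hab : M.mulVec a = b) :
    ∀ i, 0 ≤ a i := by
  by_contra h
  push_neg at h
  obtain ⟨i0, hi0⟩ := h
  set m : Fin n → ℝ := fun i => max (-(a i)) 0 with hm_def
  set p : Fin n → ℝ := fun i => max (a i) 0 with hp_def
  have hm : ∀ i, 0 ≤ m i := fun i => le_max_right _ _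
  have hp : ∀ i, 0 ≤ p i := fun i => le_max_right _ _
  have hpm : a = p - m := by
    funext i
    simp only [hm_def, hp_def, Pi.sub_apply]
    rcases le_total (a i) 0 with h | h
    · rw [max_eq_right h, max_eq_left (by linarith : (0:ℝ) ≤ -(a i))]; ring
    · rw [max_eq_left h, max_eq_right (by linarith : -(a i) ≤ 0)]; ring
  have hmul : ∀ i, m i * p i = 0 := by
    intro i
    rcases le_or_gt (a i) 0 with h | h
    · simp [hm_def, hp_def, max_eq_right h]
    · simp [hm_def, hp_def, max_eq_right (by linarith : -(a i) ≤ 0)]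
  have hmne : m ≠ 0 := by
    intro h0
    have : m i0 = 0 := congrFun h0 i0
    simp only [hm_def] at this
    have : -(a i0) ≤ 0 := by
      rcases max_cases (-(a i0)) 0 with ⟨h1, h2⟩ | ⟨h1, h2⟩ <;> linarith [this ▸ h1]
    linarith
  have h1 : 0 ≤ m ⬝ᵥ b := Finset.sum_nonneg fun i _ => mul_nonneg (hm i) (hb i)
  have h2 : m ⬝ᵥ M.mulVec p ≤ 0 := by
    rw [dotProduct]
    apply Finset.sum_nonpos
    intro i _
    rw [mulVec, dotProduct, Finset.mul_sum]
    apply Finset.sum_nonpos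
    intro j _
    rcases eq_or_ne i j with rfl | hij
    · have h0 : m i * (M i i * p i) = M i i * (m i * p i) := by ring
      rw [h0, hmul i, mul_zero]
    · nlinarith [mul_nonneg (hm i) (hp j), hoff i j hij]
  have h3 : 0 < m ⬝ᵥ M.mulVec m := by
    have := hpos.dotProduct_mulVec_pos hmne
    simpa using this
  have h4 : m ⬝ᵥ b = m ⬝ᵥ M.mulVec p - m ⬝ᵥ M.mulVec m := by
    rw [← hab, hpm, mulVec_sub, dotProduct_sub]
  linarith
end

section
/- Let M be a symmetric negative definite integer n×n matrix (n ≥ 2) with non-negative off-diagonal entries, a ∈ ℤⁿ with a_i ≥ 0, and b ∈ ℤⁿ with b_i ≥ 0 satisfying Ma = (-1 + b_0, b_1, ..., b_{n-1})ᵀ. If b_0 = 1, then b_i = 0 for all i ≠ 0. -/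
open Matrix

/-- The other half of the dichotomy after Lemma 3.2: in the system
`M a = (-1 + b 0, b 1, ..., b (n-1))` with `a, b` entrywise non-negative integers, if
`b 0 = 1` then `b i = 0` for all `i ≠ 0`. -/
theorem b_i_eq_zero_of_b_zero_eq_one (n : ℕ) (hn : 2 ≤ n) (M : Matrix (Fin n) (Fin n) ℤ)
    (hsymm : M.IsSymm)
    (hneg : ∀ x : Fin n → ℤ, x ≠ 0 → x ⬝ᵥ M.mulVec x < 0)
    (hoff : ∀ i j, i ≠ j → 0 ≤ M i j)
    (a b : Fin n → ℤ) (ha : ∀ i, 0 ≤ a i) (hb : ∀ i, 0 ≤ b i)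
    (hMa : M.mulVec a = fun i => if i = ⟨0, by omega⟩ then -1 + b i else b i)
    (hb0 : b ⟨0, by omega⟩ = 1) :
    ∀ i, i ≠ ⟨0, by omega⟩ → b i = 0 := by
  have ha0 : a = 0 := by
    by_contra h
    have hlt := hneg a h
    have hge : 0 ≤ a ⬝ᵥ M.mulVec a := by
      rw [hMa, dotProduct]
      apply Finset.sum_nonneg
      intro i _
      by_cases hi : i = ⟨0, by omega⟩
      · simp [hi, hb0]
      · simp only [hi, if_neg hi]
        exact mul_nonneg (ha i) (hb i)
    linarith
  intro i hi
  have : M.mulVec a i = b i := by rw [hMa]; simp [hi]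
  rw [ha0] at this
  simp [Matrix.mulVec_zero] at this
  exact this.symm
end

section
/- If M is a symmetric negative definite n×n matrix with non-negative off-diagonal entries and a ∈ ℝⁿ satisfies Ma = e where e is a vector with all entries non-negative and at least one entry positive, then a_i ≤ 0 for all i and a_j < 0 for at least one j. -/
open Matrix

/-- If `M` is symmetric negative definite with non-negative off-diagonal entries and
`M a = e` with `e` entrywise non-negative and non-zero, then `a` is entrywise non-positive
and some entry of `a` is negative. -/
theorem solution_nonpos (n : ℕ) (M : Matrix (Fin n) (Fin n) ℝ)
    (hsymm : M.IsSymm)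
    (hneg : ∀ x : Fin n → ℝ, x ≠ 0 → x ⬝ᵥ M.mulVec x < 0)
    (hoff : ∀ i j, i ≠ j → 0 ≤ M i j)
    (a e : Fin n → ℝ) (hMa : M.mulVec a = e)
    (he : ∀ i, 0 ≤ e i) (hne : e ≠ 0) :
    (∀ i, a i ≤ 0) ∧ ∃ j, a j < 0 := by
  set p : Fin n → ℝ := fun i => max (a i) 0 with hp
  set m : Fin n → ℝ := fun i => max (-a i) 0 with hm
  have hp0 : ∀ i, 0 ≤ p i := fun i => le_max_right _ _
  have hm0 : ∀ i, 0 ≤ m i := fun i => le_max_right _ _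
  have hpm : p = a + m := by
    funext i
    rcases le_total (a i) 0 with h | h
    · simp [hp, hm, max_eq_right h, max_eq_left (by linarith : (0:ℝ) ≤ -a i)]
    · simp [hp, hm, max_eq_left h, max_eq_right (by linarith : -a i ≤ 0)]
  have hpm0 : ∀ i, p i * m i = 0 := by
    intro i
    rcases le_total (a i) 0 with h | h
    · simp [hp, max_eq_right h]
    · simp [hm, max_eq_right (by linarith : -a i ≤ 0)]
  have key : 0 ≤ p ⬝ᵥ M.mulVec p := by
    have h1 : M.mulVec p = e + M.mulVec m := by
      rw [hpm, Matrix.mulVec_add, hMa]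
    rw [h1, dotProduct_add]
    have h2 : 0 ≤ p ⬝ᵥ e :=
      Finset.sum_nonneg fun i _ => mul_nonneg (hp0 i) (he i)
    have h3 : 0 ≤ p ⬝ᵥ M.mulVec m := by
      apply Finset.sum_nonneg
      intro i _
      unfold Matrix.mulVec dotProduct
      rw [Finset.mul_sum]
      apply Finset.sum_nonneg
      intro j _
      by_cases hij : i = j
      · subst hij
        have : p i * (M i i * m i) = (p i * m i) * M i i := by ring
        rw [this, hpm0 i, zero_mul]
      · exact mul_nonneg (hp0 i) (mul_nonneg (hoff i j hij) (hm0 j))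
    linarith
  have hpz : p = 0 := by
    by_contra h
    exact absurd key (not_le.mpr (hneg p h))
  have ha : ∀ i, a i ≤ 0 := by
    intro i
    have h := congrFun hpz i
    simp only [hp, Pi.zero_apply] at h
    by_contra hc
    push_neg at hc
    rw [max_eq_left hc.le] at h
    linarith
  refine ⟨ha, ?_⟩
  by_contra hc
  push_neg at hc
  have haz : a = 0 := funext fun i => le_antisymm (ha i) (hc i)
  apply hne
  rw [← hMa, haz, Matrix.mulVec_zero]
end

section
/- Let M be the intersection matrix of a connected negative definite configuration (symmetric integer matrix, negative definite, non-negative off-diagonal entries, and the associated graph connected). If a ∈ ℤⁿ satisfies Ma ≤ 0 entrywise (each coordinate of Ma is ≤ 0) and Ma ≠ 0, then a_i > 0 for every i. -/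
open Matrix

/-- Strict version of Lemma 3.2 for connected configurations: if `M` is a symmetric negative
definite integer matrix with non-negative off-diagonal entries whose associated graph
(edges where `M i j > 0`) is connected, and `M a ≤ 0` entrywise with `M a ≠ 0`, then every
entry of `a` is positive. -/
theorem antinef_full_support (n : ℕ) (M : Matrix (Fin n) (Fin n) ℤ)
    (hsymm : M.IsSymm)
    (hneg : ∀ x : Fin n → ℤ, x ≠ 0 → x ⬝ᵥ M.mulVec x < 0)
    (hoff : ∀ i j, i ≠ j → 0 ≤ M i j)
    (hconn : (SimpleGraph.fromRel (fun i j : Fin n => 0 < M i j)).Connected)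
    (a : Fin n → ℤ)
    (hle : ∀ i, M.mulVec a i ≤ 0)
    (hne : M.mulVec a ≠ 0) :
    ∀ i, 0 < a i := by
  -- Step 1: every entry of `a` is nonnegative
  have hanonneg : ∀ i, 0 ≤ a i := by
    by_contra h
    push_neg at h
    set b : Fin n → ℤ := fun i => max (-(a i)) 0 with hb
    have hbnonneg : ∀ i, 0 ≤ b i := fun i => le_max_right _ _
    have hbne : b ≠ 0 := by
      obtain ⟨i, hi⟩ := h
      intro h0
      have h0i := congrFun h0 i
      simp only [hb, Pi.zero_apply] at h0i
      omega
    have h1 : b ⬝ᵥ M.mulVec b < 0 := hneg b hbne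
    have e2 : b ⬝ᵥ M.mulVec a ≤ 0 := by
      apply Finset.sum_nonpos
      intro i _
      exact mul_nonpos_of_nonneg_of_nonpos (hbnonneg i) (hle i)
    have e3 : 0 ≤ b ⬝ᵥ M.mulVec (a + b) := by
      rw [dotProduct]
      apply Finset.sum_nonneg
      intro i _
      rw [Matrix.mulVec, dotProduct, Finset.mul_sum]
      apply Finset.sum_nonneg
      intro j _
      rcases eq_or_ne i j with rfl | hij
      · have hz : b i * ((a + b) i) = 0 := by
          simp only [hb, Pi.add_apply]
          rcases le_total (a i) 0 with h' | h'
          · rw [max_eq_left (by omega)]; ring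
          · rw [max_eq_right (by omega)]; ring
        have : b i * (M i i * ((a + b) i)) = M i i * (b i * ((a + b) i)) := by ring
        rw [this, hz, mul_zero]
      · have h1' : 0 ≤ (a + b) j := by
          simp only [hb, Pi.add_apply]
          rcases le_total (a j) 0 with h' | h'
          · rw [max_eq_left (by omega)]; omega
          · rw [max_eq_right (by omega)]; omega
        exact mul_nonneg (hbnonneg i) (mul_nonneg (hoff i j hij) h1')
    have e1 : b ⬝ᵥ M.mulVec (a + b) = b ⬝ᵥ M.mulVec a + b ⬝ᵥ M.mulVec b := by
      rw [Matrix.mulVec_add, dotProduct_add]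
    linarith
  -- Step 2: zeros propagate along edges
  have hzero : ∀ i, a i = 0 →
      ∀ j, (SimpleGraph.fromRel (fun i j : Fin n => 0 < M i j)).Adj i j → a j = 0 := by
    intro i hi j hadj
    obtain ⟨hne', hm⟩ := hadj
    have hMij : 0 < M i j := by
      rcases hm with h | h
      · exact h
      · have := hsymm.apply j i
        omega
    have hterm : ∀ k ∈ Finset.univ, 0 ≤ M i k * a k := by
      intro k _
      rcases eq_or_ne i k with rfl | hik
      · rw [hi, mul_zero]
      · exact mul_nonneg (hoff i k hik) (hanonneg k)
    have hsum0 : ∑ k, M i k * a k = 0 :=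
      le_antisymm (hle i) (Finset.sum_nonneg hterm)
    have hj0 := (Finset.sum_eq_zero_iff_of_nonneg hterm).mp hsum0 j (Finset.mem_univ j)
    rcases mul_eq_zero.mp hj0 with h | h
    · omega
    · exact h
  -- propagate along walks
  have prop : ∀ (u v : Fin n),
      (SimpleGraph.fromRel (fun i j : Fin n => 0 < M i j)).Walk u v → a u = 0 → a v = 0 := by
    intro u v w
    induction w with
    | nil => exact id
    | cons h p ih => intro hu; exact ih (hzero _ hu _ h)
  intro i
  rcases lt_or_eq_of_le (hanonneg i) with h | h
  · exact h
  exfalso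
  have hall : ∀ j, a j = 0 := by
    intro j
    obtain ⟨w⟩ := hconn.preconnected i j
    exact prop i j w h.symm
  apply hne
  have : a = 0 := funext hall
  rw [this, Matrix.mulVec_zero]
end
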